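/- For every Weyl tensor W on (ℝ⁴, η) and every future-directed timelike vector X ∈ ℝ⁴ (i.e. η(X,X) = Σ_{μ,ν} η_{μν} X^μ X^ν < 0 and X⁰ > 0), the Bel-Robinson tensor Q of W satisfies Q(X,X,X,X) := Σ_{α,β,γ,δ} Q_{αβγδ} X^α X^β X^γ X^δ ≥ 0. -/

import Mathlib

open Matrix


/-- The Minkowski metric `η` on `ℝ⁴` (and its inverse, which has the same components):
`η_{00} = -1`, `η_{11} = η_{22} = η_{33} = 1`, off-diagonal components zero. -/
noncomputable def eta (μ ν : Fin 4) : ℝ :=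
  if μ = ν then (if μ = 0 then -1 else 1) else 0

/-- The Levi-Civita symbol on four indices, totally antisymmetric with `ε_{0123} = 1`. -/
noncomputable def eps4 (i j k l : Fin 4) : ℝ :=
  ((((j : ℕ) : ℝ) - ((i : ℕ) : ℝ)) * (((k : ℕ) : ℝ) - ((i : ℕ) : ℝ)) *
    (((l : ℕ) : ℝ) - ((i : ℕ) : ℝ)) * (((k : ℕ) : ℝ) - ((j : ℕ) : ℝ)) *
    (((l : ℕ) : ℝ) - ((j : ℕ) : ℝ)) * (((l : ℕ) : ℝ) - ((k : ℕ) : ℝ))) / 12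

/-- A Weyl tensor on `(ℝ⁴, η)`: antisymmetric in the first and last pairs of indices,
symmetric under exchange of the pairs, satisfying the first Bianchi identity, and
trace-free. -/
def IsWeylTensor (W : Fin 4 → Fin 4 → Fin 4 → Fin 4 → ℝ) : Prop :=
  (∀ α β γ δ, W α β γ δ = -W β α γ δ) ∧
  (∀ α β γ δ, W α β γ δ = -W α β δ γ) ∧
  (∀ α β γ δ, W α β γ δ = W γ δ α β) ∧
  (∀ α β γ δ, W α β γ δ + W α γ δ β + W α δ β γ = 0) ∧
  (∀ α β, ∑ μ, ∑ ν, eta μ ν * W μ α ν β = 0)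

/-- The Hodge dual `(*W)_{αβγδ} = (1/2) Σ η^{ρμ} η^{σν} ε_{αβρσ} W_{μνγδ}`. -/
noncomputable def hodge (W : Fin 4 → Fin 4 → Fin 4 → Fin 4 → ℝ)
    (α β γ δ : Fin 4) : ℝ :=
  (1 / 2) * ∑ μ, ∑ ν, ∑ ρ, ∑ σ, eta ρ μ * eta σ ν * eps4 α β ρ σ * W μ ν γ δ

/-- The Bel-Robinson tensor
`Q_{αβγδ} = Σ η^{μρ} η^{νσ} (W_{αμβν} W_{γρδσ} + (*W)_{αμβν} (*W)_{γρδσ})`. -/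
noncomputable def belRobinson (W : Fin 4 → Fin 4 → Fin 4 → Fin 4 → ℝ)
    (α β γ δ : Fin 4) : ℝ :=
  ∑ μ, ∑ ν, ∑ ρ, ∑ σ, eta μ ρ * eta ν σ *
    (W α μ β ν * W γ ρ δ σ + hodge W α μ β ν * hodge W γ ρ δ σ)

namespace BR

lemma eta_symm (μ ν : Fin 4) : eta μ ν = eta ν μ := by
  unfold eta
  by_cases h : μ = ν
  · subst h; rfl
  · rw [if_neg h, if_neg (Ne.symm h)]

lemma eps4_swap12 (a b c d : Fin 4) : eps4 b a c d = -eps4 a b c d := by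
  unfold eps4; ring

lemma collapse (g : Fin 4 → Fin 4 → Fin 4 → Fin 4 → ℝ) :
    ∑ α, ∑ β, ∑ γ, ∑ δ, g α β γ δ
      = ∑ p : Fin 4 × Fin 4 × Fin 4 × Fin 4, g p.1 p.2.1 p.2.2.1 p.2.2.2 := by
  simp [Fintype.sum_prod_type]

lemma sum_antisym (f : Fin 4 → Fin 4 → ℝ) (h : ∀ i j, f i j = -f j i) :
    ∑ i, ∑ j, f i j = 0 := by
  have h1 : ∑ i, ∑ j, f i j = ∑ i, ∑ j, -f j i :=
    Finset.sum_congr rfl fun i _ => Finset.sum_congr rfl fun j _ => h i j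
  have hA : ∑ i, ∑ j, f i j = -∑ i : Fin 4, ∑ j : Fin 4, f j i := by
    rw [h1]; simp
  have hB : ∑ i : Fin 4, ∑ j : Fin 4, f j i = ∑ i : Fin 4, ∑ j : Fin 4, f i j :=
    Finset.sum_comm
  linarith

lemma swap8 (F : Fin 4 → Fin 4 → Fin 4 → Fin 4 → Fin 4 → Fin 4 → Fin 4 → Fin 4 → ℝ) :
    ∑ α, ∑ β, ∑ γ, ∑ δ, ∑ μ, ∑ ν, ∑ ρ, ∑ σ, F α β γ δ μ ν ρ σ
      = ∑ μ, ∑ ν, ∑ ρ, ∑ σ, ∑ α, ∑ β, ∑ γ, ∑ δ, F α β γ δ μ ν ρ σ := by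
  have h1 : ∑ α, ∑ β, ∑ γ, ∑ δ, ∑ μ, ∑ ν, ∑ ρ, ∑ σ, F α β γ δ μ ν ρ σ
      = ∑ p : Fin 4 × Fin 4 × Fin 4 × Fin 4, ∑ q : Fin 4 × Fin 4 × Fin 4 × Fin 4,
          F p.1 p.2.1 p.2.2.1 p.2.2.2 q.1 q.2.1 q.2.2.1 q.2.2.2 := by
    rw [collapse fun α β γ δ => ∑ μ, ∑ ν, ∑ ρ, ∑ σ, F α β γ δ μ ν ρ σ]
    exact Finset.sum_congr rfl fun p _ => collapse _
  have h2 : ∑ μ, ∑ ν, ∑ ρ, ∑ σ, ∑ α, ∑ β, ∑ γ, ∑ δ, F α β γ δ μ ν ρ σ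
      = ∑ q : Fin 4 × Fin 4 × Fin 4 × Fin 4, ∑ p : Fin 4 × Fin 4 × Fin 4 × Fin 4,
          F p.1 p.2.1 p.2.2.1 p.2.2.2 q.1 q.2.1 q.2.2.1 q.2.2.2 := by
    rw [collapse fun μ ν ρ σ => ∑ α, ∑ β, ∑ γ, ∑ δ, F α β γ δ μ ν ρ σ]
    exact Finset.sum_congr rfl fun q _ => collapse _
  rw [h1, h2, Finset.sum_comm]

lemma key_ineq (a b u1 u2 u3 v1 v2 v3 : ℝ) (hq : 0 < a^2 - (u1^2+u2^2+u3^2)) :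
    0 ≤ (a^2 - (u1^2+u2^2+u3^2)) * (-(b)^2 + v1^2 + v2^2 + v3^2)
      + (a*b + u1*v1 + u2*v2 + u3*v3)^2 := by
  rcases eq_or_lt_of_le (by positivity : (0:ℝ) ≤ u1^2+u2^2+u3^2) with h | h
  · have h1 : u1 = 0 := by nlinarith [sq_nonneg u1, sq_nonneg u2, sq_nonneg u3]
    have h2 : u2 = 0 := by nlinarith [sq_nonneg u1, sq_nonneg u2, sq_nonneg u3]
    have h3 : u3 = 0 := by nlinarith [sq_nonneg u1, sq_nonneg u2, sq_nonneg u3]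
    subst h1; subst h2; subst h3
    nlinarith [sq_nonneg (a*v1), sq_nonneg (a*v2), sq_nonneg (a*v3)]
  · nlinarith [sq_nonneg (a*(u1*v1+u2*v2+u3*v3) + b*(u1^2+u2^2+u3^2)),
      mul_nonneg hq.le (sq_nonneg (u1*v2 - u2*v1)),
      mul_nonneg hq.le (sq_nonneg (u1*v3 - u3*v1)),
      mul_nonneg hq.le (sq_nonneg (u2*v3 - u3*v2)), h]

lemma P_posSemidef (X : Fin 4 → ℝ) (q : ℝ) (hq : 0 < q)
    (hqdef : X 0 ^ 2 - (X 1 ^ 2 + X 2 ^ 2 + X 3 ^ 2) = q) :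
    (Matrix.of (fun μ ν => eta μ ν + X μ * X ν / q)).PosSemidef := by
  refine Matrix.posSemidef_iff_dotProduct_mulVec.mpr ⟨?_, ?_⟩
  · ext μ ν
    simp [Matrix.conjTranspose_apply, eta_symm μ ν]
    ring
  · intro x
    have key := key_ineq (X 0) (x 0) (X 1) (X 2) (X 3) (x 1) (x 2) (x 3)
      (by rw [hqdef]; exact hq)
    rw [hqdef] at key
    have expand : dotProduct (star x)
        ((Matrix.of (fun μ ν => eta μ ν + X μ * X ν / q)).mulVec x)
        = (q * (-(x 0)^2 + (x 1)^2 + (x 2)^2 + (x 3)^2)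
            + (X 0 * x 0 + X 1 * x 1 + X 2 * x 2 + X 3 * x 3)^2) / q := by
      simp [dotProduct, Matrix.mulVec, Fin.sum_univ_four, eta]
      field_simp
      ring
    rw [expand]
    apply div_nonneg _ hq.le
    nlinarith [key]

lemma quad_nonneg (T : Fin 4 → Fin 4 → ℝ) (X : Fin 4 → ℝ) (q : ℝ) (hq : 0 < q)
    (hqdef : X 0 ^ 2 - (X 1 ^ 2 + X 2 ^ 2 + X 3 ^ 2) = q)
    (hL : ∀ ν, ∑ μ, X μ * T μ ν = 0) (hR : ∀ μ, ∑ ν, X ν * T μ ν = 0) :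
    0 ≤ ∑ μ, ∑ ν, ∑ ρ, ∑ σ, eta μ ρ * eta ν σ * T μ ν * T ρ σ := by
  classical
  set MT : Matrix (Fin 4) (Fin 4) ℝ := Matrix.of T with hMT
  set G : Matrix (Fin 4) (Fin 4) ℝ := Matrix.of eta with hG
  set P : Matrix (Fin 4) (Fin 4) ℝ := Matrix.of (fun μ ν => eta μ ν + X μ * X ν / q) with hP
  set V : Matrix (Fin 4) (Fin 4) ℝ := Matrix.vecMulVec X X with hV
  have hPGV : P = G + q⁻¹ • V := by
    ext μ ν
    simp [hP, hG, hV, Matrix.vecMulVec_apply, div_eq_inv_mul]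
  have hTV : MT * V = 0 := by
    ext i j
    simp only [Matrix.mul_apply, hV, Matrix.vecMulVec_apply, Matrix.zero_apply, hMT,
      Matrix.of_apply]
    have h : ∀ k, T i k * (X k * X j) = (X k * T i k) * X j := fun k => by ring
    rw [Finset.sum_congr rfl fun k _ => h k, ← Finset.sum_mul, hR i, zero_mul]
  have hTtV : MTᵀ * V = 0 := by
    ext i j
    simp only [Matrix.mul_apply, hV, Matrix.vecMulVec_apply, Matrix.zero_apply, hMT,
      Matrix.transpose_apply, Matrix.of_apply]
    have h : ∀ k, T k i * (X k * X j) = (X k * T k i) * X j := fun k => by ring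
    rw [Finset.sum_congr rfl fun k _ => h k, ← Finset.sum_mul, hL i, zero_mul]
  have htrace : Matrix.trace (MTᵀ * G * MT * G) = Matrix.trace (MTᵀ * P * MT * P) := by
    rw [hPGV]
    simp [Matrix.mul_add, Matrix.add_mul, Matrix.mul_smul, Matrix.mul_assoc, hTV, hTtV]
  obtain ⟨B, hB⟩ : ∃ B : Matrix (Fin 4) (Fin 4) ℝ,
      Matrix.of (fun μ ν => eta μ ν + X μ * X ν / q) = Bᴴ * B := by
    have h := P_posSemidef X q hq hqdef
    open scoped MatrixOrder in
    exact ⟨CFC.sqrt _, by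
      have h0 : 0 ≤ Matrix.of (fun μ ν => eta μ ν + X μ * X ν / q) :=
        Matrix.nonneg_iff_posSemidef.mpr h
      have hs : IsSelfAdjoint (CFC.sqrt (Matrix.of (fun μ ν => eta μ ν + X μ * X ν / q))) :=
        (CFC.sqrt_nonneg _).isSelfAdjoint
      rw [show (CFC.sqrt (Matrix.of (fun μ ν => eta μ ν + X μ * X ν / q)))ᴴ = CFC.sqrt _ from hs,
        CFC.sqrt_mul_sqrt_self _ h0]⟩
  have hMTH : MTᴴ = MTᵀ := Matrix.conjTranspose_eq_transpose_of_trivial MT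
  have hgoal_eq : ∑ μ, ∑ ν, ∑ ρ, ∑ σ, eta μ ρ * eta ν σ * T μ ν * T ρ σ
      = Matrix.trace (MTᵀ * G * MT * G) := by
    simp [Matrix.trace, Matrix.diag, Matrix.mul_apply, hMT, hG, Matrix.of_apply,
      Matrix.transpose_apply, Fin.sum_univ_four, eta]
    ring
  rw [← hP] at hB
  have h2 : Matrix.trace (MTᵀ * P * MT * P)
      = Matrix.trace ((B * MT * Bᴴ)ᴴ * (B * MT * Bᴴ)) := by
    rw [hB]
    simp only [Matrix.conjTranspose_mul, Matrix.conjTranspose_conjTranspose, hMTH,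
      Matrix.mul_assoc]
    rw [Matrix.trace_mul_comm B (MTᵀ * (Bᴴ * (B * (MT * Bᴴ))))]
    simp [Matrix.mul_assoc]
  have h3 : 0 ≤ Matrix.trace ((B * MT * Bᴴ)ᴴ * (B * MT * Bᴴ)) := by
    rw [Matrix.trace]
    refine Finset.sum_nonneg fun i _ => ?_
    rw [Matrix.diag_apply, Matrix.mul_apply]
    refine Finset.sum_nonneg fun j _ => ?_
    simp only [Matrix.conjTranspose_apply, RCLike.star_def]
    exact mul_self_nonneg _
  rw [hgoal_eq, htrace, h2]
  exact h3

lemma hodge_antisym_first (W : Fin 4 → Fin 4 → Fin 4 → Fin 4 → ℝ) (α β γ δ : Fin 4) :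
    hodge W β α γ δ = -hodge W α β γ δ := by
  unfold hodge
  have h : ∀ (μ ν ρ σ : Fin 4), eta ρ μ * eta σ ν * eps4 β α ρ σ * W μ ν γ δ
      = -(eta ρ μ * eta σ ν * eps4 α β ρ σ * W μ ν γ δ) := fun μ ν ρ σ => by
    rw [eps4_swap12]; ring
  simp only [h, Finset.sum_neg_distrib]
  ring

lemma hodge_antisym_last (W : Fin 4 → Fin 4 → Fin 4 → Fin 4 → ℝ)
    (hW2 : ∀ a b c d, W a b c d = -W a b d c) (α β γ δ : Fin 4) :
    hodge W α β δ γ = -hodge W α β γ δ := by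
  unfold hodge
  have h : ∀ (μ ν ρ σ : Fin 4), eta ρ μ * eta σ ν * eps4 α β ρ σ * W μ ν δ γ
      = -(eta ρ μ * eta σ ν * eps4 α β ρ σ * W μ ν γ δ) := fun μ ν ρ σ => by
    rw [show W μ ν δ γ = -W μ ν γ δ from by rw [← hW2]]; ring
  simp only [h, Finset.sum_neg_distrib]
  ring

lemma contract_left (V : Fin 4 → Fin 4 → Fin 4 → Fin 4 → ℝ) (X : Fin 4 → ℝ)
    (hA : ∀ a b c d, V a b c d = -V b a c d) (ν : Fin 4) :
    ∑ μ, X μ * (∑ α, ∑ β, V α μ β ν * X α * X β) = 0 := by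
  have h1 : ∑ μ, X μ * (∑ α, ∑ β, V α μ β ν * X α * X β)
      = ∑ μ : Fin 4, ∑ α : Fin 4, ∑ β, X μ * (V α μ β ν * X α * X β) := by
    simp [Finset.mul_sum]
  rw [h1, Finset.sum_comm]
  exact sum_antisym (fun α μ => ∑ β, X μ * (V α μ β ν * X α * X β))
    (fun α μ => by
      rw [← Finset.sum_neg_distrib]
      exact Finset.sum_congr rfl fun β _ => by rw [hA]; ring)

lemma contract_right (V : Fin 4 → Fin 4 → Fin 4 → Fin 4 → ℝ) (X : Fin 4 → ℝ)
    (hA : ∀ a b c d, V a b c d = -V a b d c) (μ : Fin 4) :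
    ∑ ν, X ν * (∑ α, ∑ β, V α μ β ν * X α * X β) = 0 := by
  have h1 : ∑ ν, X ν * (∑ α, ∑ β, V α μ β ν * X α * X β)
      = ∑ ν : Fin 4, ∑ α : Fin 4, ∑ β, X ν * (V α μ β ν * X α * X β) := by
    simp [Finset.mul_sum]
  rw [h1, Finset.sum_comm]
  refine Finset.sum_eq_zero fun α _ => ?_
  exact sum_antisym (fun ν β => X ν * (V α μ β ν * X α * X β))
    (fun ν β => by
      show X ν * (V α μ β ν * X α * X β) = -(X β * (V α μ ν β * X α * X ν))
      rw [hA]; ring)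

lemma collapse2 (g : Fin 4 → Fin 4 → ℝ) :
    ∑ a, ∑ b, g a b = ∑ p : Fin 4 × Fin 4, g p.1 p.2 := by
  simp [Fintype.sum_prod_type]

lemma swap4 (F : Fin 4 → Fin 4 → Fin 4 → Fin 4 → ℝ) :
    ∑ a, ∑ b, ∑ c, ∑ d, F a b c d = ∑ c, ∑ d, ∑ a, ∑ b, F a b c d := by
  have h1 : ∑ a, ∑ b, ∑ c, ∑ d, F a b c d
      = ∑ p : Fin 4 × Fin 4, ∑ q : Fin 4 × Fin 4, F p.1 p.2 q.1 q.2 := by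
    rw [collapse2 fun a b => ∑ c, ∑ d, F a b c d]
    exact Finset.sum_congr rfl fun p _ => collapse2 _
  have h2 : ∑ c, ∑ d, ∑ a, ∑ b, F a b c d
      = ∑ q : Fin 4 × Fin 4, ∑ p : Fin 4 × Fin 4, F p.1 p.2 q.1 q.2 := by
    rw [collapse2 fun c d => ∑ a, ∑ b, F a b c d]
    exact Finset.sum_congr rfl fun q _ => collapse2 _
  rw [h1, h2, Finset.sum_comm]

lemma factor4 (f g : Fin 4 → Fin 4 → ℝ) (c : ℝ) :
    ∑ α, ∑ β, ∑ γ, ∑ δ, c * (f α β * g γ δ)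
      = c * ((∑ α, ∑ β, f α β) * (∑ γ : Fin 4, ∑ δ : Fin 4, g γ δ)) := by
  simp only [Finset.sum_mul, Finset.mul_sum]
  rw [swap4 (fun α β γ δ => c * (f γ δ * g α β))]

lemma reorg (V : Fin 4 → Fin 4 → Fin 4 → Fin 4 → ℝ) (X : Fin 4 → ℝ) :
    ∑ α, ∑ β, ∑ γ, ∑ δ,
      (∑ μ, ∑ ν, ∑ ρ, ∑ σ, eta μ ρ * eta ν σ * (V α μ β ν * V γ ρ δ σ))
        * X α * X β * X γ * X δ
      = ∑ μ, ∑ ν, ∑ ρ, ∑ σ, eta μ ρ * eta ν σ *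
          ((∑ α, ∑ β, V α μ β ν * X α * X β) * (∑ γ, ∑ δ, V γ ρ δ σ * X γ * X δ)) := by
  have h1 : ∑ α, ∑ β, ∑ γ, ∑ δ,
      (∑ μ, ∑ ν, ∑ ρ, ∑ σ, eta μ ρ * eta ν σ * (V α μ β ν * V γ ρ δ σ))
        * X α * X β * X γ * X δ
      = ∑ α, ∑ β, ∑ γ, ∑ δ, ∑ μ, ∑ ν, ∑ ρ, ∑ σ,
          eta μ ρ * eta ν σ *
            ((V α μ β ν * X α * X β) * (V γ ρ δ σ * X γ * X δ)) := by
    refine Finset.sum_congr rfl fun α _ => Finset.sum_congr rfl fun β _ =>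
      Finset.sum_congr rfl fun γ _ => Finset.sum_congr rfl fun δ _ => ?_
    simp only [Finset.sum_mul]
    refine Finset.sum_congr rfl fun μ _ => Finset.sum_congr rfl fun ν _ =>
      Finset.sum_congr rfl fun ρ _ => Finset.sum_congr rfl fun σ _ => by ring
  rw [h1, swap8]
  refine Finset.sum_congr rfl fun μ _ => Finset.sum_congr rfl fun ν _ =>
    Finset.sum_congr rfl fun ρ _ => Finset.sum_congr rfl fun σ _ => ?_
  exact factor4 (fun α β => V α μ β ν * X α * X β) (fun γ δ => V γ ρ δ σ * X γ * X δ)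
    (eta μ ρ * eta ν σ)

lemma quad_nonneg' (V : Fin 4 → Fin 4 → Fin 4 → Fin 4 → ℝ) (X : Fin 4 → ℝ) (q : ℝ)
    (hq : 0 < q) (hqdef : X 0 ^ 2 - (X 1 ^ 2 + X 2 ^ 2 + X 3 ^ 2) = q)
    (hA1 : ∀ a b c d, V a b c d = -V b a c d)
    (hA2 : ∀ a b c d, V a b c d = -V a b d c) :
    0 ≤ ∑ μ, ∑ ν, ∑ ρ, ∑ σ, eta μ ρ * eta ν σ *
        ((∑ α, ∑ β, V α μ β ν * X α * X β) * (∑ γ, ∑ δ, V γ ρ δ σ * X γ * X δ)) := by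
  have h := quad_nonneg (fun μ ν => ∑ α, ∑ β, V α μ β ν * X α * X β) X q hq hqdef
    (fun ν => contract_left V X hA1 ν) (fun μ => contract_right V X hA2 μ)
  have hEq : (∑ μ, ∑ ν, ∑ ρ, ∑ σ, eta μ ρ * eta ν σ *
        ((fun μ ν => ∑ α, ∑ β, V α μ β ν * X α * X β) μ ν)
        * ((fun μ ν => ∑ α, ∑ β, V α μ β ν * X α * X β) ρ σ))
      = ∑ μ, ∑ ν, ∑ ρ, ∑ σ, eta μ ρ * eta ν σ *
        ((∑ α, ∑ β, V α μ β ν * X α * X β) * (∑ γ, ∑ δ, V γ ρ δ σ * X γ * X δ)) := by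
    refine Finset.sum_congr rfl fun μ _ => Finset.sum_congr rfl fun ν _ =>
      Finset.sum_congr rfl fun ρ _ => Finset.sum_congr rfl fun σ _ => by ring
  rw [← hEq]
  exact h

end BR

/-- For every future-directed timelike vector `X`, the Bel-Robinson tensor of a Weyl
tensor satisfies `Q(X,X,X,X) ≥ 0`. -/
theorem belRobinson_positivity (W : Fin 4 → Fin 4 → Fin 4 → Fin 4 → ℝ)
    (hW : IsWeylTensor W) (X : Fin 4 → ℝ)
    (hTimelike : ∑ μ, ∑ ν, eta μ ν * X μ * X ν < 0) (hFuture : 0 < X 0) :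
    0 ≤ ∑ α, ∑ β, ∑ γ, ∑ δ, belRobinson W α β γ δ * X α * X β * X γ * X δ := by
  obtain ⟨h1, h2, h3, h4, h5⟩ := hW
  have hq : 0 < X 0 ^ 2 - (X 1 ^ 2 + X 2 ^ 2 + X 3 ^ 2) := by
    simp [Fin.sum_univ_four, eta] at hTimelike
    nlinarith [hTimelike]
  have hsplit : ∑ α, ∑ β, ∑ γ, ∑ δ, belRobinson W α β γ δ * X α * X β * X γ * X δ
      = (∑ α, ∑ β, ∑ γ, ∑ δ,
          (∑ μ, ∑ ν, ∑ ρ, ∑ σ, eta μ ρ * eta ν σ * (W α μ β ν * W γ ρ δ σ))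
            * X α * X β * X γ * X δ)
        + (∑ α, ∑ β, ∑ γ, ∑ δ,
          (∑ μ, ∑ ν, ∑ ρ, ∑ σ, eta μ ρ * eta ν σ * (hodge W α μ β ν * hodge W γ ρ δ σ))
            * X α * X β * X γ * X δ) := by
    simp only [belRobinson, mul_add, Finset.sum_add_distrib, add_mul]
  rw [hsplit, BR.reorg W X, BR.reorg (hodge W) X]
  have p1 := BR.quad_nonneg' W X _ hq rfl h1 h2
  have p2 := BR.quad_nonneg' (hodge W) X _ hq rfl
    (fun a b c d => BR.hodge_antisym_first W b a c d)
    (fun a b c d => BR.hodge_antisym_last W h2 a b d c)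
  linarith
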